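/- Let G be a finite acyclic directed graph and F a set of edges with all endpoints in a subset V' ⊆ V. The graph G ∪ F is acyclic if and only if the graph on V' with edge set F ∪ {(u,v) ∈ V'×V' | v reachable from u in G via a nonempty path} is acyclic. -/

import Mathlib

open Relation

section aux

variable {V : Type*} (E : V → V → Prop) (V' : Set V) (F : V → V → Prop)

private def Rrel : V → V → Prop := fun a b => E a b ∨ F a b

private def Srel : V → V → Prop :=
  fun a b => F a b ∨ (a ∈ V' ∧ b ∈ V' ∧ TransGen E a b)

variable {E V' F}

private lemma edgeRS (hF : ∀ a b, F a b → a ∈ V' ∧ b ∈ V') {a b : V}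
    (h : Srel E V' F a b) : TransGen (Rrel E F) a b := by
  rcases h with h | ⟨_, _, h⟩
  · exact TransGen.single (Or.inr h)
  · exact TransGen.mono (fun _ _ he => Or.inl he) _ _ h

private lemma pathSR (hF : ∀ a b, F a b → a ∈ V' ∧ b ∈ V') {a b : V}
    (h : TransGen (Srel E V' F) a b) : TransGen (Rrel E F) a b := by
  induction h with
  | single h => exact edgeRS hF h
  | tail _ h ih => exact ih.trans (edgeRS hF h)

private lemma keyB (hF : ∀ a b, F a b → a ∈ V' ∧ b ∈ V') {x y : V}
    (h : TransGen (Rrel E F) x y) (hx : x ∈ V') :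
    TransGen E x y ∨
      ∃ z, z ∈ V' ∧ TransGen (Srel E V' F) x z ∧ ReflTransGen E z y := by
  induction h with
  | @single c h =>
    rcases h with h | h
    · exact Or.inl (TransGen.single h)
    · exact Or.inr ⟨c, (hF _ _ h).2,
        TransGen.single (show Srel E V' F x c from Or.inl h), ReflTransGen.refl⟩
  | @tail b c hxb h ih =>
    rcases ih with hE | ⟨z, hz, hxz, hzb⟩
    · rcases h with h | h
      · exact Or.inl (hE.tail h)
      · refine Or.inr ⟨c, (hF _ _ h).2, ?_, ReflTransGen.refl⟩
        exact (TransGen.single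
          (show Srel E V' F x b from Or.inr ⟨hx, (hF _ _ h).1, hE⟩)).tail
          (show Srel E V' F b c from Or.inl h)
    · rcases h with h | h
      · exact Or.inr ⟨z, hz, hxz, hzb.tail h⟩
      · refine Or.inr ⟨c, (hF _ _ h).2, ?_, ReflTransGen.refl⟩
        rcases (Relation.reflTransGen_iff_eq_or_transGen.mp hzb) with rfl | hzb'
        · exact hxz.tail (show Srel E V' F b c from Or.inl h)
        · exact (hxz.tail
            (show Srel E V' F z b from Or.inr ⟨hz, (hF _ _ h).1, hzb'⟩)).tail
            (show Srel E V' F b c from Or.inl h)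

private lemma keyC {x y : V} (h : TransGen (Rrel E F) x y) :
    TransGen E x y ∨
      ∃ u w, F u w ∧ ReflTransGen (Rrel E F) x u ∧ ReflTransGen (Rrel E F) w y := by
  induction h with
  | @single c h =>
    rcases h with h | h
    · exact Or.inl (TransGen.single h)
    · exact Or.inr ⟨x, c, h, ReflTransGen.refl, ReflTransGen.refl⟩
  | @tail b c hxb h ih =>
    rcases ih with hE | ⟨u, w, hf, hxu, hwb⟩
    · rcases h with h | h
      · exact Or.inl (hE.tail h)
      · exact Or.inr ⟨b, c, h,
          (TransGen.mono (fun _ _ he => (Or.inl he : Rrel E F _ _)) _ _ hE).to_reflTransGen,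
          ReflTransGen.refl⟩
    · exact Or.inr ⟨u, w, hf, hxu, hwb.tail h⟩

end aux

/-- Let `G = (V,E)` be a finite acyclic directed graph, `V' ⊆ V`, and `F` a
set of new edges with all endpoints in `V'`.  Then `G ∪ F` is acyclic iff
the graph on `V'` with edge set `F` together with the closure edges
`{(u,v) ∈ V'×V' | v reachable from u in G via a nonempty path}` is
acyclic. -/
theorem stmt_14 {V : Type*} [Fintype V] (E : V → V → Prop)
    (hacyc : ¬ ∃ v, Relation.TransGen E v v)
    (V' : Set V) (F : V → V → Prop) (hF : ∀ a b, F a b → a ∈ V' ∧ b ∈ V') :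
    (¬ ∃ v, Relation.TransGen (fun a b => E a b ∨ F a b) v v) ↔
      (¬ ∃ v, Relation.TransGen
        (fun a b => F a b ∨ (a ∈ V' ∧ b ∈ V' ∧ Relation.TransGen E a b)) v v) := by
  constructor
  · intro h ⟨v, hv⟩
    exact h ⟨v, pathSR hF (show TransGen (Srel E V' F) v v from hv)⟩
  · intro h ⟨v, hv⟩
    rcases keyC (show TransGen (Rrel E F) v v from hv) with hE | ⟨u, w, hf, hvu, hwv⟩
    · exact hacyc ⟨v, hE⟩
    · have hw : w ∈ V' := (hF _ _ hf).2
      have hcyc : TransGen (Rrel E F) w w :=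
        TransGen.tail' (hwv.trans hvu) (Or.inr hf)
      rcases keyB hF hcyc hw with hE | ⟨z, hz, hxz, hzw⟩
      · exact hacyc ⟨w, hE⟩
      · rcases (Relation.reflTransGen_iff_eq_or_transGen.mp hzw) with rfl | hzw'
        · exact h ⟨_, hxz⟩
        · exact h ⟨w, hxz.tail
            (show Srel E V' F z w from Or.inr ⟨hz, hw, hzw'⟩)⟩
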